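/- There exists a subgroup P of Q of index 2 (i.e. with 2048 elements) that is invariant under the automorphism φ_c for every nonzero c ∈ F and under the automorphism σ. -/
import Mathlib


noncomputable section

/-- `F` is the field `GF(8)` with 8 elements (characteristic 2). -/
abbrev F : Type := GaloisField 2 3

/-- The trace map `Tr : F → F`, `Tr α = α + α² + α⁴`. -/
def Tr (α : F) : F := α + α ^ 2 + α ^ 4

theorem Tr_zero : Tr 0 = 0 := by simp [Tr]

theorem F.pow8 (x : F) : x ^ 8 = x := by
  haveI : Fintype F := Fintype.ofFinite F
  have h := FiniteField.pow_card x
  rwa [← Nat.card_eq_fintype_card, GaloisField.card 2 3 (by norm_num)] at h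

theorem F.add_sq (x y : F) : (x + y) ^ 2 = x ^ 2 + y ^ 2 := CharTwo.add_sq x y

theorem F.add_pow4 (x y : F) : (x + y) ^ 4 = x ^ 4 + y ^ 4 := by
  rw [show (4 : ℕ) = 2 * 2 from rfl, pow_mul, pow_mul, pow_mul, F.add_sq, F.add_sq]

theorem F.two (x : F) : x + x = 0 := CharTwo.add_self_eq_zero x

/-- The group `Q = 1 + J` of the paper, coded as quadruples of coefficients. -/
structure Q : Type where
  a1 : F
  a2 : F
  a3 : F
  a4 : F

namespace Q

instance : Mul Q :=
  ⟨fun a b =>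
    ⟨a.a1 + b.a1, a.a2 + b.a2 + a.a1 * b.a1 ^ 2,
      a.a3 + b.a3 + a.a1 * b.a2 ^ 2 + a.a2 * b.a1 ^ 4,
      a.a4 + b.a4 + a.a1 * b.a3 ^ 2 + a.a2 * b.a2 ^ 4 + a.a3 * b.a1⟩⟩

theorem mul_def (a b : Q) :
    a * b =
      ⟨a.a1 + b.a1, a.a2 + b.a2 + a.a1 * b.a1 ^ 2,
        a.a3 + b.a3 + a.a1 * b.a2 ^ 2 + a.a2 * b.a1 ^ 4,
        a.a4 + b.a4 + a.a1 * b.a3 ^ 2 + a.a2 * b.a2 ^ 4 + a.a3 * b.a1⟩ :=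
  rfl

instance : One Q := ⟨⟨0, 0, 0, 0⟩⟩

theorem one_def : (1 : Q) = ⟨0, 0, 0, 0⟩ := rfl

instance : Inv Q :=
  ⟨fun a =>
    ⟨a.a1, a.a2 + a.a1 ^ 3,
      a.a3 + a.a1 * (a.a2 + a.a1 ^ 3) ^ 2 + a.a2 * a.a1 ^ 4,
      a.a4 + a.a1 * (a.a3 + a.a1 * (a.a2 + a.a1 ^ 3) ^ 2 + a.a2 * a.a1 ^ 4) ^ 2 +
        a.a2 * (a.a2 + a.a1 ^ 3) ^ 4 + a.a3 * a.a1⟩⟩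

theorem inv_def (a : Q) :
    a⁻¹ =
      ⟨a.a1, a.a2 + a.a1 ^ 3,
        a.a3 + a.a1 * (a.a2 + a.a1 ^ 3) ^ 2 + a.a2 * a.a1 ^ 4,
        a.a4 + a.a1 * (a.a3 + a.a1 * (a.a2 + a.a1 ^ 3) ^ 2 + a.a2 * a.a1 ^ 4) ^ 2 +
          a.a2 * (a.a2 + a.a1 ^ 3) ^ 4 + a.a3 * a.a1⟩ :=
  rfl

theorem pr8 (x : F) : x ^ 8 = x := F.pow8 x
theorem pr9 (x : F) : x ^ 9 = x ^ 2 := by rw [show (9:ℕ) = 1+8 from rfl, pow_add, F.pow8]; ring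
theorem pr10 (x : F) : x ^ 10 = x ^ 3 := by rw [show (10:ℕ) = 2+8 from rfl, pow_add, F.pow8]; ring
theorem pr11 (x : F) : x ^ 11 = x ^ 4 := by rw [show (11:ℕ) = 3+8 from rfl, pow_add, F.pow8]; ring
theorem pr12 (x : F) : x ^ 12 = x ^ 5 := by rw [show (12:ℕ) = 4+8 from rfl, pow_add, F.pow8]; ring
theorem pr13 (x : F) : x ^ 13 = x ^ 6 := by rw [show (13:ℕ) = 5+8 from rfl, pow_add, F.pow8]; ring
theorem pr14 (x : F) : x ^ 14 = x ^ 7 := by rw [show (14:ℕ) = 6+8 from rfl, pow_add, F.pow8]; ring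
theorem pr15 (x : F) : x ^ 15 = x := by rw [show (15:ℕ) = 7+8 from rfl, pow_add, F.pow8, ← pow_succ, F.pow8]
theorem pr16 (x : F) : x ^ 16 = x ^ 2 := by rw [show (16:ℕ) = 8+8 from rfl, pow_add, F.pow8]; ring
theorem pr17 (x : F) : x ^ 17 = x ^ 3 := by rw [show (17:ℕ) = 9+8 from rfl, pow_add, F.pow8, pr9]; ring
theorem pr18 (x : F) : x ^ 18 = x ^ 4 := by rw [show (18:ℕ) = 10+8 from rfl, pow_add, F.pow8, pr10]; ring
theorem pr19 (x : F) : x ^ 19 = x ^ 5 := by rw [show (19:ℕ) = 11+8 from rfl, pow_add, F.pow8, pr11]; ring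
theorem pr20 (x : F) : x ^ 20 = x ^ 6 := by rw [show (20:ℕ) = 12+8 from rfl, pow_add, F.pow8, pr12]; ring

theorem mul_assoc' (a b c : Q) : a * b * c = a * (b * c) := by
  obtain ⟨a1, a2, a3, a4⟩ := a
  obtain ⟨b1, b2, b3, b4⟩ := b
  obtain ⟨c1, c2, c3, c4⟩ := c
  simp only [mul_def, mk.injEq]
  refine ⟨by ring, ?_, ?_, ?_⟩ <;>
  · simp only [F.add_sq, F.add_pow4, mul_pow]
    ring_nf
    try simp only [pr8, pr9, pr10, pr11, pr12, pr13, pr14, pr15, pr16, pr17, pr18, pr19, pr20]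
    try ring_nf

theorem one_mul' (a : Q) : 1 * a = a := by
  obtain ⟨a1, a2, a3, a4⟩ := a
  simp only [one_def, mul_def, mk.injEq]
  refine ⟨by ring, by ring, by ring, by ring⟩


theorem mul_one' (a : Q) : a * 1 = a := by
  obtain ⟨a1, a2, a3, a4⟩ := a
  simp only [one_def, mul_def, mk.injEq]
  refine ⟨by ring, by ring, by ring, by ring⟩

theorem inv_mul_cancel' (a : Q) : a⁻¹ * a = 1 := by
  obtain ⟨a1, a2, a3, a4⟩ := a
  show Q.mk _ _ _ _ * _ = _
  simp only [one_def, mul_def, mk.injEq]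
  refine ⟨?_, ?_, ?_, ?_⟩ <;>
  · try simp only [F.add_sq, F.add_pow4, mul_pow]
    try ring_nf
    try simp only [pr8, pr9, pr10, pr11, pr12, pr13, pr14, pr15, pr16, pr17, pr18, pr19, pr20]
    try ring_nf
    try simp [CharTwo.two_eq_zero]
    try ring_nf
    try simp [CharTwo.two_eq_zero]

instance : Group Q where
  mul_assoc := mul_assoc'
  one_mul := one_mul'
  mul_one := mul_one'
  inv_mul_cancel := inv_mul_cancel'

end Q

namespace Q

/-- The homomorphism value `f(a) = Tr(a₃ + a₁a₂²) + a₁⁷`. -/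
def f (q : Q) : F := Tr (q.a3 + q.a1 * q.a2 ^ 2) + q.a1 ^ 7

theorem F.add_pow7 (x y : F) :
    (x + y) ^ 7 = (x + y) * (x ^ 2 + y ^ 2) * (x ^ 4 + y ^ 4) := by
  rw [show (7:ℕ) = 1 + 2 + 4 from rfl, pow_add, pow_add, pow_one, F.add_sq, F.add_pow4]

theorem f_mul (a b : Q) : f (a * b) = f a + f b := by
  obtain ⟨a1, a2, a3, a4⟩ := a
  obtain ⟨b1, b2, b3, b4⟩ := b
  show Tr (a3 + b3 + a1 * b2 ^ 2 + a2 * b1 ^ 4 + (a1 + b1) * (a2 + b2 + a1 * b1 ^ 2) ^ 2)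
      + (a1 + b1) ^ 7
    = (Tr (a3 + a1 * a2 ^ 2) + a1 ^ 7) + (Tr (b3 + b1 * b2 ^ 2) + b1 ^ 7)
  simp only [Tr, F.add_pow7]
  simp only [F.add_sq, F.add_pow4, mul_pow]
  ring_nf
  simp only [pr8, pr9, pr10, pr11, pr12, pr13, pr14, pr15, pr16, pr17, pr18, pr19, pr20]
  ring_nf
  try simp [CharTwo.two_eq_zero]
  try ring_nf

theorem f_one : f 1 = 0 := by
  show Tr (0 + 0 * 0 ^ 2) + (0:F) ^ 7 = 0
  simp [Tr]

theorem Tr_sq (x : F) : Tr x ^ 2 = Tr x := by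
  simp only [Tr, F.add_sq]
  rw [show ((x ^ 4) ^ 2 : F) = x ^ 8 by ring, F.pow8]
  ring

theorem Tr_sq2 (x : F) : Tr (x ^ 2) = Tr x := by
  simp only [Tr]
  rw [show ((x ^ 2) ^ 4 : F) = x ^ 8 by ring, F.pow8]
  ring

theorem f_sq (q : Q) : f q ^ 2 = f q := by
  simp only [f, F.add_sq, Tr_sq]
  rw [show ((q.a1 ^ 7) ^ 2 : F) = q.a1 ^ 14 by ring, pr14]

theorem f01 (q : Q) : f q = 0 ∨ f q = 1 := by
  have h : f q * (f q - 1) = 0 := by linear_combination f_sq q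
  rcases mul_eq_zero.mp h with h' | h'
  · exact Or.inl h'
  · exact Or.inr (by linear_combination h')

open scoped Classical

/-- `f` as a monoid hom to `Multiplicative (ZMod 2)`. -/
def g : Q →* Multiplicative (ZMod 2) where
  toFun q := Multiplicative.ofAdd (if f q = 0 then 0 else 1)
  map_one' := by simp [f_one]
  map_mul' a b := by
    have hab := f_mul a b
    have h1 : (1 : F) ≠ 0 := one_ne_zero
    rcases f01 a with ha | ha <;> rcases f01 b with hb | hb <;>
      simp [ha, hb, hab, F.two (1:F), h1, ← ofAdd_add] <;> rfl

theorem mem_ker_iff (q : Q) : q ∈ g.ker ↔ f q = 0 := by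
  rw [MonoidHom.mem_ker]
  show Multiplicative.ofAdd (if f q = 0 then 0 else 1) = Multiplicative.ofAdd 0 ↔ _
  rw [Equiv.apply_eq_iff_eq]
  split
  · next h => simp [h]
  · next h => simp [h, one_ne_zero]

theorem f_e1 : f ⟨1, 0, 0, 0⟩ = 1 := by
  show Tr (0 + 1 * 0 ^ 2) + (1:F) ^ 7 = 1
  simp [Tr]

theorem g_surjective : Function.Surjective g := by
  intro y
  have hy : ∀ a : ZMod 2, a = 0 ∨ a = 1 := by decide
  rcases hy y.toAdd with h | h
  · refine ⟨1, ?_⟩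
    have : y = Multiplicative.ofAdd (0 : ZMod 2) := by rw [← h]; rfl
    rw [this, map_one]; rfl
  · refine ⟨⟨1, 0, 0, 0⟩, ?_⟩
    have : y = Multiplicative.ofAdd (1 : ZMod 2) := by rw [← h]; rfl
    rw [this]
    show Multiplicative.ofAdd (if f ⟨1,0,0,0⟩ = 0 then (0:ZMod 2) else 1) = _
    rw [f_e1]
    simp [one_ne_zero]

theorem card_Q : Nat.card Q = 4096 := by
  have e : Q ≃ F × F × F × F :=
    { toFun := fun q => (q.a1, q.a2, q.a3, q.a4)
      invFun := fun p => ⟨p.1, p.2.1, p.2.2.1, p.2.2.2⟩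
      left_inv := fun q => rfl
      right_inv := fun p => rfl }
  rw [Nat.card_congr e]
  simp [Nat.card_prod, GaloisField.card 2 3 (by norm_num)]

theorem ker_index : g.ker.index = 2 := by
  rw [Subgroup.index_ker, MonoidHom.range_eq_top.mpr g_surjective]
  rw [Subgroup.card_top]
  simp [Nat.card_eq_fintype_card]

end Q

namespace Q

/-- The map `φ_c` (conjugation by the constant `c ∈ F⁺`). -/
def phi (c : F) (a : Q) : Q := ⟨a.a1 * c, a.a2 * c ^ 3, a.a3, a.a4 * c⟩

/-- The map `σ` (the Frobenius automorphism of `F` applied coordinatewise). -/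
def sigma (a : Q) : Q := ⟨a.a1 ^ 2, a.a2 ^ 2, a.a3 ^ 2, a.a4 ^ 2⟩

/-- There is a subgroup `P` of `Q` of index `2` (so with `2048` elements) invariant
under `φ_c` for every nonzero `c ∈ F` and under `σ`. -/
theorem exists_invariant_index_two_subgroup :
    ∃ P : Subgroup Q, P.index = 2 ∧ Nat.card P = 2048 ∧
      (∀ c : F, c ≠ 0 → ∀ x ∈ P, phi c x ∈ P) ∧ (∀ x ∈ P, sigma x ∈ P) := by
  refine ⟨g.ker, ker_index, ?_, ?_, ?_⟩
  · have h := Subgroup.card_mul_index g.ker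
    rw [ker_index, card_Q] at h
    omega
  · intro c hc x hx
    rw [mem_ker_iff] at hx ⊢
    obtain ⟨a1, a2, a3, a4⟩ := x
    have h7 : c ^ 7 = 1 := mul_right_cancel₀ hc (by rw [← pow_succ, F.pow8, one_mul])
    show Tr (a3 + a1 * c * (a2 * c ^ 3) ^ 2) + (a1 * c) ^ 7 = 0
    have e1 : a1 * c * (a2 * c ^ 3) ^ 2 = a1 * a2 ^ 2 := by
      calc a1 * c * (a2 * c ^ 3) ^ 2 = a1 * a2 ^ 2 * c ^ 7 := by ring
        _ = a1 * a2 ^ 2 := by rw [h7, mul_one]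
    have e2 : (a1 * c) ^ 7 = a1 ^ 7 := by rw [mul_pow, h7, mul_one]
    rw [e1, e2]
    exact hx
  · intro x hx
    rw [mem_ker_iff] at hx ⊢
    obtain ⟨a1, a2, a3, a4⟩ := x
    have : f (sigma ⟨a1, a2, a3, a4⟩) = f ⟨a1, a2, a3, a4⟩ ^ 2 := by
      show Tr (a3 ^ 2 + a1 ^ 2 * (a2 ^ 2) ^ 2) + (a1 ^ 2) ^ 7
        = (Tr (a3 + a1 * a2 ^ 2) + a1 ^ 7) ^ 2
      rw [F.add_sq, Tr_sq]
      congr 1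
      · rw [show a3 ^ 2 + a1 ^ 2 * (a2 ^ 2) ^ 2 = (a3 + a1 * a2 ^ 2) ^ 2 by
          rw [F.add_sq]; ring, Tr_sq2]
      · ring
    rw [this, hx]
    exact zero_pow (by norm_num)


end Q
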